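/- Let z₁, z₂ ∈ ℂ with |z₁| + |z₂| ≤ 1. Set α = √(1 − (|z₁| − |z₂|)²), β = √(1 − (|z₁| + |z₂|)²), f = (α + β)/2, and g = −(z₁·conj(z₂)/(2·|z₁·z₂|))·(α − β) if z₁·z₂ ≠ 0, while g = 0 if z₁·z₂ = 0. Then f² + |g|² = 1 − |z₁|² − |z₂|² and f·g + z₁·conj(z₂) = 0. -/

import Mathlib

open Complex

/-- The key scalar identities used in the construction of pure `ℍ`-isometries
(Theorem 5.10 of the paper): for `|z₁| + |z₂| ≤ 1`, with
`α = √(1 − (|z₁| − |z₂|)²)`, `β = √(1 − (|z₁| + |z₂|)²)`, `f = (α + β)/2` and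
`g = −(z₁·conj z₂/(2|z₁z₂|))·(α − β)` (with `g = 0` when `z₁z₂ = 0`), one has
`f² + |g|² = 1 − |z₁|² − |z₂|²` and `f·g + z₁·conj z₂ = 0`. -/
theorem scalar_identities_for_pure_H_isometry
    (z₁ z₂ : ℂ) (h : ‖z₁‖ + ‖z₂‖ ≤ 1)
    (α β f : ℝ) (g : ℂ)
    (hα : α = Real.sqrt (1 - (‖z₁‖ - ‖z₂‖) ^ 2))
    (hβ : β = Real.sqrt (1 - (‖z₁‖ + ‖z₂‖) ^ 2))
    (hf : f = (α + β) / 2)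
    (hg₁ : z₁ * z₂ ≠ 0 →
      g = -(z₁ * (starRingEnd ℂ) z₂ / (2 * (‖z₁ * z₂‖ : ℂ))) * ((α : ℂ) - (β : ℂ)))
    (hg₂ : z₁ * z₂ = 0 → g = 0) :
    f ^ 2 + ‖g‖ ^ 2 = 1 - ‖z₁‖ ^ 2 - ‖z₂‖ ^ 2 ∧
      (f : ℂ) * g + z₁ * (starRingEnd ℂ) z₂ = 0 := by
  set a := ‖z₁‖ with ha
  set b := ‖z₂‖ with hb
  have ha0 : 0 ≤ a := norm_nonneg z₁
  have hb0 : 0 ≤ b := norm_nonneg z₂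
  have hβnn : 0 ≤ 1 - (a + b) ^ 2 := by nlinarith
  have hαnn : 0 ≤ 1 - (a - b) ^ 2 := by nlinarith
  have hα2 : α ^ 2 = 1 - (a - b) ^ 2 := by rw [hα]; exact Real.sq_sqrt hαnn
  have hβ2 : β ^ 2 = 1 - (a + b) ^ 2 := by rw [hβ]; exact Real.sq_sqrt hβnn
  have hα0 : 0 ≤ α := hα ▸ Real.sqrt_nonneg _
  have hβ0 : 0 ≤ β := hβ ▸ Real.sqrt_nonneg _
  have hαβ : β ≤ α := by
    rw [hα, hβ]; apply Real.sqrt_le_sqrt; nlinarith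
  by_cases hz : z₁ * z₂ = 0
  · have hg := hg₂ hz
    have hab : a * b = 0 := by
      rcases mul_eq_zero.mp hz with h1 | h1 <;> simp [ha, hb, h1]
    have hαβeq : α = β := by
      rw [hα, hβ]; congr 1; nlinarith
    constructor
    · rw [hg, hf, hαβeq]; simp; nlinarith
    · rw [hg]
      rcases mul_eq_zero.mp hz with h1 | h1 <;> simp [h1]
  · have hg := hg₁ hz
    have habs : ‖z₁ * z₂‖ = a * b := norm_mul z₁ z₂
    have hab0 : a * b ≠ 0 := by
      intro hc; exact hz (by rwa [← habs, norm_eq_zero] at hc)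
    have habsg : ‖g‖ = (α - β) / 2 := by
      have h2 : (α : ℂ) - (β : ℂ) = ((α - β : ℝ) : ℂ) := by push_cast; ring
      rw [hg, h2, norm_mul, norm_neg, norm_div, norm_mul, Complex.norm_conj,
        norm_mul, Complex.norm_two, Complex.norm_real, Complex.norm_real, Real.norm_eq_abs, Real.norm_eq_abs, habs,
        _root_.abs_of_nonneg (mul_nonneg ha0 hb0),
        _root_.abs_of_nonneg (show (0:ℝ) ≤ α - β by linarith), ← ha, ← hb]
      field_simp [left_ne_zero_of_mul hab0, right_ne_zero_of_mul hab0]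
    refine ⟨by rw [habsg, hf]; nlinarith, ?_⟩
    rw [hg, hf, habs]
    have hne : ((a : ℂ) * b) ≠ 0 := by exact_mod_cast hab0
    have hr : (α + β) * (α - β) = 4 * (a * b) := by nlinarith
    have hsq : ((α : ℂ) + β) * ((α : ℂ) - β) = 4 * ((a : ℂ) * b) := by
      exact_mod_cast congrArg (fun x : ℝ => (x : ℂ)) hr
    push_cast
    field_simp [left_ne_zero_of_mul hne, right_ne_zero_of_mul hne]
    linear_combination (-(z₁ * (starRingEnd ℂ) z₂)) * hsq
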